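/- arXiv:1402.2040 — 3 statements merged into one kernel-verified Lean document; each statement's English description precedes it below -/
import Mathlib

section
/- Let k ≥ 1, let q = (q_1,…,q_n) be nonnegative reals, and let a = (a_1,…,a_n), b = (b_1,…,b_n) be non-increasing n-tuples of nonnegative integers such that Σ_{i=1}^{j} q_i a_i ≥ Σ_{i=1}^{j} q_i b_i for 1 ≤ j ≤ n−1 and Σ_{i=1}^{n} q_i a_i = Σ_{i=1}^{n} q_i b_i. Then Π_{i=1}^{n} [S(a_i+k,k)/C(a_i+k,k)]^{q_i} ≥ Π_{i=1}^{n} [S(b_i+k,k)/C(b_i+k,k)]^{q_i}. -/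
open MeasureTheory Finset
open scoped Nat
noncomputable section

open Finset

/-- Stirling numbers of the second kind. -/
def S : ℕ → ℕ → ℕ
  | 0, 0 => 1
  | 0, _ + 1 => 0
  | _ + 1, 0 => 0
  | n + 1, k + 1 => (k + 1) * S n (k + 1) + S n k

lemma S_succ_succ (n k : ℕ) : S (n+1) (k+1) = (k+1) * S n (k+1) + S n k := rfl

lemma S_zero_succ (k : ℕ) : S 0 (k+1) = 0 := rfl
lemma S_succ_zero (n : ℕ) : S (n+1) 0 = 0 := rfl
lemma S_zero_zero : S 0 0 = 1 := rfl

lemma S_eq_zero_of_lt : ∀ {n k}, n < k → S n k = 0 := by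
  intro n
  induction n with
  | zero => intro k hk; match k, hk with
            | k+1, _ => rfl
  | succ n ih =>
    intro k hk
    match k, hk with
    | k+1, hk =>
      rw [S_succ_succ, ih (by omega), ih (by omega)]
      simp

lemma S_self : ∀ n, S n n = 1 := by
  intro n
  induction n with
  | zero => rfl
  | succ n ih => rw [S_succ_succ, S_eq_zero_of_lt (by omega), ih]; simp

lemma S_pos (m k : ℕ) (hk : 1 ≤ k) : 0 < S (m + k) k := by
  induction m with
  | zero => simp [S_self]
  | succ m ih =>
    match k, hk with
    | k+1, _ =>
      have : m + (k+1) + 1 = (m + (k+1)) + 1 := rfl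
      rw [show m + 1 + (k+1) = (m + (k+1)) + 1 by omega, S_succ_succ]
      have := ih
      positivity

lemma key_nat : ∀ N k, (k+1) * S N (k+1) = ∑ i ∈ range N, N.choose i * S i k := by
  intro N
  induction N with
  | zero => intro k; simp [S_zero_succ]
  | succ N ih =>
    intro k
    have expand : ∑ i ∈ range (N+1), (N+1).choose i * S i k
        = (∑ i ∈ range N, N.choose i * S (i+1) k)
          + (∑ i ∈ range N, N.choose (i+1) * S (i+1) k) + S 0 k := by
      rw [Finset.sum_range_succ']
      simp only [Nat.choose_succ_succ, Nat.choose_zero_right, one_mul, add_mul]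
      rw [Finset.sum_add_distrib]
    have h2 : (∑ i ∈ range N, N.choose (i+1) * S (i+1) k) + S 0 k
        = (∑ i ∈ range N, N.choose i * S i k) + S N k := by
      have e1 : ∑ i ∈ range (N+1), N.choose i * S i k
          = (∑ i ∈ range N, N.choose (i+1) * S (i+1) k) + N.choose 0 * S 0 k :=
        Finset.sum_range_succ' _ _
      have e2 : ∑ i ∈ range (N+1), N.choose i * S i k
          = (∑ i ∈ range N, N.choose i * S i k) + N.choose N * S N k :=
        Finset.sum_range_succ _ _
      simp only [Nat.choose_zero_right, one_mul, Nat.choose_self] at e1 e2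
      omega
    have main : ∑ i ∈ range (N+1), (N+1).choose i * S i k
        = (∑ i ∈ range N, N.choose i * S (i+1) k)
          + (∑ i ∈ range N, N.choose i * S i k) + S N k := by omega
    rw [main]
    match k with
    | 0 =>
      have hz : ∀ i, S (i+1) 0 = 0 := fun i => rfl
      simp only [hz, mul_zero, Finset.sum_const_zero, zero_add]
      have := ih 0
      rw [S_succ_succ]
      omega
    | k+1 =>
      have hsplit : ∑ i ∈ range N, N.choose i * S (i+1) (k+1)
          = (k+1) * (∑ i ∈ range N, N.choose i * S i (k+1))
            + ∑ i ∈ range N, N.choose i * S i k := by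
        rw [Finset.mul_sum, ← Finset.sum_add_distrib]
        congr 1; ext i
        rw [S_succ_succ]; ring
      rw [hsplit, ← ih (k+1), ← ih k, S_succ_succ]
      ring

lemma key_nat' (m k : ℕ) :
    (k+1) * S (m+k+1) (k+1) = ∑ j ∈ range (m+1), (m+k+1).choose (j+k) * S (j+k) k := by
  rw [key_nat]
  rw [show m + k + 1 = k + (m+1) by omega]
  rw [Finset.sum_range_add]
  have h1 : ∑ i ∈ range k, (k + (m+1)).choose i * S i k = 0 := by
    apply Finset.sum_eq_zero
    intro i hi
    rw [S_eq_zero_of_lt (mem_range.mp hi), mul_zero]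
  rw [h1, zero_add]
  congr 1
  ext j
  rw [show k + j = j + k by omega]

noncomputable section

def mu1 : Measure ℝ := volume.restrict (Set.Icc 0 1)

instance : IsProbabilityMeasure mu1 := by
  constructor
  rw [mu1, Measure.restrict_apply_univ, Real.volume_Icc]
  norm_num

def nu (k : ℕ) : Measure (Fin k → ℝ) := Measure.pi fun _ => mu1

instance (k : ℕ) : IsProbabilityMeasure (nu k) := by
  unfold nu; infer_instance

lemma nu_cube (k : ℕ) : nu k (Set.pi Set.univ fun _ : Fin k => Set.Icc (0:ℝ) 1) = 1 := by
  rw [nu, Measure.pi_pi]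
  have : mu1 (Set.Icc (0:ℝ) 1) = 1 := by
    rw [mu1, Measure.restrict_apply measurableSet_Icc, Set.inter_self, Real.volume_Icc]
    norm_num
  simp [this]

lemma ae_cube (k : ℕ) : ∀ᵐ x ∂ nu k, ∀ i, x i ∈ Set.Icc (0:ℝ) 1 := by
  have hmeas : MeasurableSet (Set.pi Set.univ fun _ : Fin k => Set.Icc (0:ℝ) 1) :=
    MeasurableSet.univ_pi fun _ => measurableSet_Icc
  have h0 : nu k (Set.pi Set.univ fun _ : Fin k => Set.Icc (0:ℝ) 1)ᶜ = 0 := by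
    rw [measure_compl hmeas (measure_ne_top _ _), nu_cube, measure_univ]
    simp
  have h1 : ∀ᵐ x ∂ nu k, x ∈ (Set.pi Set.univ fun _ : Fin k => Set.Icc (0:ℝ) 1) :=
    mem_ae_iff.mpr h0
  filter_upwards [h1] with x hx i
  exact hx i (Set.mem_univ i)

lemma integrable_pow_sum (k m : ℕ) :
    Integrable (fun x : Fin k → ℝ => (∑ i, x i)^m) (nu k) := by
  have hc : Continuous fun x : Fin k → ℝ => (∑ i, x i)^m :=
    (continuous_finset_sum _ fun i _ => continuous_apply i).pow m
  apply Integrable.mono' (integrable_const ((k:ℝ)^m)) hc.aestronglyMeasurable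
  filter_upwards [ae_cube k] with x hx
  have h1 : |∑ i, x i| ≤ (k:ℝ) := by
    calc |∑ i, x i| ≤ ∑ i, |x i| := Finset.abs_sum_le_sum_abs _ _
      _ ≤ ∑ _i : Fin k, (1:ℝ) :=
          Finset.sum_le_sum fun i _ => abs_le.mpr ⟨by linarith [(hx i).1], (hx i).2⟩
      _ = k := by simp
  rw [norm_pow, Real.norm_eq_abs]
  exact pow_le_pow_left₀ (abs_nonneg _) h1 m

lemma integrable_mu1_pow (c : ℕ) : Integrable (fun t : ℝ => t^c) mu1 := by
  rw [mu1]
  exact (continuous_pow c).continuousOn.integrableOn_compact isCompact_Icc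

lemma integral_pow_mu1 (c : ℕ) : ∫ t, t^c ∂ mu1 = 1/((c:ℝ)+1) := by
  rw [mu1]
  rw [show (∫ t in Set.Icc (0:ℝ) 1, t^c) = ∫ t in Set.Ioc (0:ℝ) 1, t^c from
    integral_Icc_eq_integral_Ioc]
  rw [← intervalIntegral.integral_of_le zero_le_one, integral_pow]
  rw [one_pow, zero_pow (Nat.succ_ne_zero c)]
  push_cast
  ring

def F (k m : ℕ) : ℝ := ∫ x, (∑ i, x i)^m ∂ nu k

lemma F_zero (m : ℕ) : F 0 m = (0:ℝ)^m := by
  rw [F]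
  simp only [Finset.univ_eq_empty, Finset.sum_empty]
  rw [integral_const]
  simp

lemma F_succ (k m : ℕ) : F (k+1) m
    = ∑ j ∈ range (m+1), (m.choose j : ℝ) * (1/(((m-j:ℕ):ℝ)+1) * F k j) := by
  have hmp : MeasurePreserving (⇑(MeasurableEquiv.piFinSuccAbove (fun _ : Fin (k+1) => ℝ) 0))
      (nu (k+1)) (mu1.prod (nu k)) :=
    measurePreserving_piFinSuccAbove (fun _ : Fin (k+1) => mu1) 0
  have h1 : F (k+1) m = ∫ p : ℝ × (Fin k → ℝ), ((∑ i, p.2 i) + p.1)^m ∂(mu1.prod (nu k)) := by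
    rw [F, ← hmp.integral_comp' (fun p : ℝ × (Fin k → ℝ) => ((∑ i, p.2 i) + p.1)^m)]
    apply integral_congr_ae
    apply Filter.Eventually.of_forall
    intro x
    simp [MeasurableEquiv.piFinSuccAbove_apply, Fin.insertNthEquiv_zero, Fin.consEquiv, Fin.tail,
      Fin.sum_univ_succ]
    ring
  rw [h1]
  have point : ∀ p : ℝ × (Fin k → ℝ), ((∑ i, p.2 i) + p.1)^m
      = ∑ j ∈ range (m+1), (m.choose j : ℝ) * (p.1^(m-j) * (∑ i, p.2 i)^j) := by
    intro p
    rw [add_pow]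
    apply Finset.sum_congr rfl
    intro j _
    push_cast
    ring
  rw [integral_congr_ae (Filter.Eventually.of_forall point)]
  rw [integral_finset_sum _ (fun j _ =>
    (((integrable_mu1_pow (m-j)).mul_prod (integrable_pow_sum k j)).const_mul _))]
  apply Finset.sum_congr rfl
  intro j _
  rw [integral_const_mul,
    integral_prod_mul (f := fun t : ℝ => t^(m-j)) (g := fun y : Fin k → ℝ => (∑ i, y i)^j),
    integral_pow_mu1]
  rfl

lemma F_logconvex (k m : ℕ) : F k (m+1)^2 ≤ F k m * F k (m+2) := by
  have hP : True := trivial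
  have hcube2 : ∀ᵐ z ∂((nu k).prod (nu k)), (0 ≤ ∑ i, z.1 i) ∧ (0 ≤ ∑ i, z.2 i) := by
    set cube := (Set.pi Set.univ fun _ : Fin k => Set.Icc (0:ℝ) 1) with hcdef
    have hmeas : MeasurableSet cube := MeasurableSet.univ_pi fun _ => measurableSet_Icc
    have h1 : ((nu k).prod (nu k)) (cube ×ˢ cube) = 1 := by
      rw [Measure.prod_prod, nu_cube]
      norm_num
    have h0 : ((nu k).prod (nu k)) (cube ×ˢ cube)ᶜ = 0 := by
      rw [measure_compl (hmeas.prod hmeas) (measure_ne_top _ _), h1, measure_univ]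
      simp
    filter_upwards [mem_ae_iff.mpr h0] with z hz
    obtain ⟨hz1, hz2⟩ := hz
    constructor
    · exact Finset.sum_nonneg fun i _ => (hz1 i (Set.mem_univ i)).1
    · exact Finset.sum_nonneg fun i _ => (hz2 i (Set.mem_univ i)).1
  have key : 0 ≤ ∫ z : (Fin k → ℝ) × (Fin k → ℝ),
      ((∑ i, z.1 i) * (∑ i, z.2 i))^m * ((∑ i, z.1 i) - (∑ i, z.2 i))^2 ∂((nu k).prod (nu k)) := by
    apply integral_nonneg_of_ae
    filter_upwards [hcube2] with z hz
    exact mul_nonneg (pow_nonneg (mul_nonneg hz.1 hz.2) m) (sq_nonneg _)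
  have point : ∀ z : (Fin k → ℝ) × (Fin k → ℝ),
      ((∑ i, z.1 i) * (∑ i, z.2 i))^m * ((∑ i, z.1 i) - (∑ i, z.2 i))^2
      = (∑ i, z.1 i)^(m+2) * (∑ i, z.2 i)^m + (∑ i, z.1 i)^m * (∑ i, z.2 i)^(m+2)
        - 2 * ((∑ i, z.1 i)^(m+1) * (∑ i, z.2 i)^(m+1)) := by
    intro z
    ring
  rw [integral_congr_ae (Filter.Eventually.of_forall point)] at key
  have I1 := (integrable_pow_sum k (m+2)).mul_prod (integrable_pow_sum k m)
  have I2 := (integrable_pow_sum k m).mul_prod (integrable_pow_sum k (m+2))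
  have I3 := ((integrable_pow_sum k (m+1)).mul_prod (integrable_pow_sum k (m+1))).const_mul (2:ℝ)
  have I12 : Integrable (fun z : (Fin k → ℝ) × (Fin k → ℝ) =>
      (∑ i, z.1 i)^(m+2) * (∑ i, z.2 i)^m + (∑ i, z.1 i)^m * (∑ i, z.2 i)^(m+2))
      ((nu k).prod (nu k)) := I1.add I2
  rw [integral_sub I12 I3, integral_add I1 I2, integral_const_mul,
    integral_prod_mul (f := fun y : Fin k → ℝ => (∑ i, y i)^(m+2)) (g := fun y : Fin k → ℝ => (∑ i, y i)^m),
    integral_prod_mul (f := fun y : Fin k → ℝ => (∑ i, y i)^m) (g := fun y : Fin k → ℝ => (∑ i, y i)^(m+2)),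
    integral_prod_mul (f := fun y : Fin k → ℝ => (∑ i, y i)^(m+1)) (g := fun y : Fin k → ℝ => (∑ i, y i)^(m+1))] at key
  have hF : ∀ T : ℕ, (∫ x : Fin k → ℝ, (∑ i, x i)^T ∂ nu k) = F k T := fun T => rfl
  simp only [hF] at key
  nlinarith [key]

lemma term_eq (m k j : ℕ) (hj : j ≤ m) :
    (m.choose j : ℝ) * (1/(((m-j:ℕ):ℝ)+1) * ((j ! : ℝ) * (k ! : ℝ) * (S (j+k) k : ℝ) / ((j+k)! : ℝ)))
    = (((m+k+1).choose (j+k) * S (j+k) k : ℕ) : ℝ) * ((m ! : ℝ) * (k ! : ℝ) / (((m+k+1)! : ℕ) : ℝ)) := by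
  have hsub : m + k + 1 - (j + k) = (m - j) + 1 := by omega
  have hA : (m ! : ℝ) = (m.choose j : ℝ) * (j ! : ℝ) * ((m-j)! : ℝ) := by
    have := Nat.choose_mul_factorial_mul_factorial hj
    exact_mod_cast this.symm
  have hB : ((m+k+1)! : ℝ)
      = ((m+k+1).choose (j+k) : ℝ) * ((j+k)! : ℝ) * (((m-j)+1)! : ℝ) := by
    have := Nat.choose_mul_factorial_mul_factorial (show j + k ≤ m + k + 1 by omega)
    rw [hsub] at this
    exact_mod_cast this.symm
  have h3 : (((m-j)+1)! : ℝ) = (((m-j:ℕ):ℝ)+1) * ((m-j)! : ℝ) := by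
    rw [Nat.factorial_succ]
    push_cast
    ring
  have hne : ∀ p : ℕ, ((p)! : ℝ) ≠ 0 := fun p => Nat.cast_ne_zero.mpr (Nat.factorial_ne_zero p)
  have hne2 : (((m-j:ℕ):ℝ)+1) ≠ 0 := by positivity
  have hne3 : ((m+k+1).choose (j+k) : ℝ) ≠ 0 :=
    Nat.cast_ne_zero.mpr (Nat.choose_pos (show j + k ≤ m + k + 1 by omega)).ne'
  have e1 : (m.choose j : ℝ) * (1/(((m-j:ℕ):ℝ)+1) * ((j ! : ℝ) * (k ! : ℝ) * (S (j+k) k : ℝ) / ((j+k)! : ℝ)))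
      = ((m.choose j : ℝ) * (j ! : ℝ) * (k ! : ℝ) * (S (j+k) k : ℝ))
        / ((((m-j:ℕ):ℝ)+1) * ((j+k)! : ℝ)) := by
    rw [div_mul_div_comm, one_mul, mul_div_assoc']
    ring_nf
  have e2 : (((m+k+1).choose (j+k) : ℝ) * (S (j+k) k : ℝ)) * ((m ! : ℝ) * (k ! : ℝ) / (((m+k+1)! : ℕ) : ℝ))
      = (((m+k+1).choose (j+k) : ℝ) * (S (j+k) k : ℝ) * ((m ! : ℝ) * (k ! : ℝ)))
        / (((m+k+1)! : ℕ) : ℝ) := by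
    ring
  rw [Nat.cast_mul, e1, e2, div_eq_div_iff (mul_ne_zero hne2 (hne (j+k))) (hne (m+k+1))]
  rw [hA, hB, h3]
  ring

lemma F_eq : ∀ k m : ℕ, F k m = (m ! : ℝ) * (k ! : ℝ) * (S (m+k) k : ℝ) / (((m+k)! : ℕ) : ℝ) := by
  intro k
  induction k with
  | zero =>
    intro m
    rw [F_zero]
    match m with
    | 0 => simp [S_zero_zero]
    | m+1 =>
      rw [S_succ_zero]
      simp
  | succ k ih =>
    intro m
    rw [F_succ]
    have step1 : ∀ j ∈ range (m+1),
        (m.choose j : ℝ) * (1/(((m-j:ℕ):ℝ)+1) * F k j)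
        = (((m+k+1).choose (j+k) * S (j+k) k : ℕ) : ℝ) * ((m ! : ℝ) * (k ! : ℝ) / (((m+k+1)! : ℕ) : ℝ)) := by
      intro j hj
      rw [ih j, term_eq m k j (by simp at hj; omega)]
    rw [Finset.sum_congr rfl step1, ← Finset.sum_mul, ← Nat.cast_sum, ← key_nat' m k]
    have hfac : (((m+k+1)+1)! : ℝ) ≠ 0 := Nat.cast_ne_zero.mpr (Nat.factorial_ne_zero _)
    have : (m + (k+1)) = (m + k + 1) := by omega
    rw [this]
    rw [Nat.factorial_succ (k)]
    push_cast
    field_simp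
open Finset

lemma hinge_diff (x t : ℕ) :
    max ((x+1:ℕ) - (t+1:ℕ) : ℝ) 0 - max ((x:ℕ) - (t+1:ℕ) : ℝ) 0
      = if t < x then 1 else 0 := by
  rcases le_or_gt (t+1) x with h | h
  · rw [if_pos (by omega)]
    rw [max_eq_left, max_eq_left]
    · push_cast; ring
    · have : (t+1 : ℝ) ≤ (x : ℝ) := by exact_mod_cast h
      push_cast; linarith
    · have : (t+1 : ℝ) ≤ (x+1 : ℝ) := by push_cast; exact_mod_cast le_trans h (by omega)
      push_cast; push_cast at this; linarith
  · rw [if_neg (by omega)]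
    rw [max_eq_right, max_eq_right]
    · ring
    · have : (x : ℝ) ≤ (t : ℝ) := by exact_mod_cast Nat.lt_succ_iff.mp h
      push_cast; linarith
    · have : (x : ℝ) ≤ (t : ℝ) := by exact_mod_cast Nat.lt_succ_iff.mp h
      push_cast; linarith

lemma rep_lemma (g : ℕ → ℝ) (M : ℕ) :
    ∀ x, x ≤ M → g x = g 0 + (g 1 - g 0) * x
      + ∑ t ∈ range M, ((g (t+2) - g (t+1)) - (g (t+1) - g t)) * max ((x:ℕ) - (t+1:ℕ) : ℝ) 0 := by
  intro x
  induction x with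
  | zero =>
    intro _
    have : ∀ t ∈ range M, ((g (t+2) - g (t+1)) - (g (t+1) - g t)) * max ((0:ℕ) - (t+1:ℕ) : ℝ) 0 = 0 := by
      intro t _
      rw [max_eq_right]
      · ring
      · push_cast; linarith [Nat.cast_nonneg (α := ℝ) t]
    rw [Finset.sum_congr rfl this]
    simp
  | succ x ih =>
    intro hx
    have hx' : x ≤ M := by omega
    have key : ∑ t ∈ range M, ((g (t+2) - g (t+1)) - (g (t+1) - g t)) *
          (max ((x+1:ℕ) - (t+1:ℕ) : ℝ) 0 - max ((x:ℕ) - (t+1:ℕ) : ℝ) 0)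
        = g (x+1) - g x - (g 1 - g 0) := by
      have : ∀ t ∈ range M, ((g (t+2) - g (t+1)) - (g (t+1) - g t)) *
          (max ((x+1:ℕ) - (t+1:ℕ) : ℝ) 0 - max ((x:ℕ) - (t+1:ℕ) : ℝ) 0)
          = if t ∈ range x then ((g (t+2) - g (t+1)) - (g (t+1) - g t)) else 0 := by
        intro t ht
        rw [hinge_diff]
        simp only [mem_range]
        split_ifs <;> ring
      rw [Finset.sum_congr rfl this, Finset.sum_ite_mem]
      have hint : range M ∩ range x = range x := by
        ext u; simp only [Finset.mem_inter, mem_range]; omega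
      rw [hint]
      have tel : ∑ t ∈ range x, ((g (t+2) - g (t+1)) - (g (t+1) - g t))
          = (g (x+1) - g x) - (g 1 - g 0) := by
        have := Finset.sum_range_sub (f := fun t => g (t+1) - g t) x
        simpa using this
      rw [tel]
    have expand : ∑ t ∈ range M, ((g (t+2) - g (t+1)) - (g (t+1) - g t)) * max ((x+1:ℕ) - (t+1:ℕ) : ℝ) 0
        = (∑ t ∈ range M, ((g (t+2) - g (t+1)) - (g (t+1) - g t)) * max ((x:ℕ) - (t+1:ℕ) : ℝ) 0)
          + (g (x+1) - g x - (g 1 - g 0)) := by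
      rw [← key, ← Finset.sum_add_distrib]
      congr 1; ext t; ring
    rw [expand, ih hx']
    push_cast
    ring

lemma fuchs (g : ℕ → ℝ) (hg : ∀ m, 2 * g (m+1) ≤ g m + g (m+2))
    (n : ℕ) (q : ℕ → ℝ) (a b : ℕ → ℕ)
    (hq : ∀ i, 0 ≤ q i)
    (hb : ∀ i j, i ≤ j → j < n → b j ≤ b i)
    (hmaj : ∀ j, 1 ≤ j → j ≤ n - 1 →
      ∑ i ∈ Finset.range j, q i * (b i : ℝ) ≤ ∑ i ∈ Finset.range j, q i * (a i : ℝ))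
    (heq : ∑ i ∈ Finset.range n, q i * (a i : ℝ) = ∑ i ∈ Finset.range n, q i * (b i : ℝ)) :
    ∑ i ∈ range n, q i * g (b i) ≤ ∑ i ∈ range n, q i * g (a i) := by
  -- hinge dominance
  have hinge_dom : ∀ T : ℕ, 1 ≤ T →
      ∑ i ∈ range n, q i * max ((b i : ℝ) - (T:ℕ)) 0 ≤
        ∑ i ∈ range n, q i * max ((a i : ℝ) - (T:ℕ)) 0 := by
    intro T hT
    have hex : ∃ i, n ≤ i ∨ b i < T := ⟨n, Or.inl le_rfl⟩
    classical
    set j := Nat.find hex with hjdef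
    have hPj := Nat.find_spec hex
    have hjn : j ≤ n := Nat.find_le (Or.inl le_rfl)
    have hlt : ∀ i, i < j → i < n ∧ T ≤ b i := by
      intro i hi
      have := Nat.find_min hex hi
      push_neg at this
      omega
    have hge : ∀ i, j ≤ i → i < n → b i < T := by
      intro i hji hin
      have hjlt : j < n := by omega
      rw [← hjdef] at hPj
      have hbj : b j < T := hPj.resolve_left (by omega)
      have := hb j i hji hin
      omega
    -- LHS over range n equals sum over range j of q i * (b i - T)
    have hsplit : ∑ i ∈ range n, q i * max ((b i : ℝ) - (T:ℕ)) 0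
        = ∑ i ∈ range j, q i * ((b i : ℝ) - (T:ℕ)) := by
      rw [← Finset.sum_range_add_sum_Ico _ hjn]
      have h1 : ∀ i ∈ Finset.Ico j n, q i * max ((b i : ℝ) - (T:ℕ)) 0 = 0 := by
        intro i hi
        rw [Finset.mem_Ico] at hi
        have : b i < T := hge i hi.1 hi.2
        rw [max_eq_right, mul_zero]
        have : (b i : ℝ) ≤ (T : ℝ) := by exact_mod_cast this.le
        linarith
      rw [Finset.sum_eq_zero h1, add_zero]
      apply Finset.sum_congr rfl
      intro i hi
      rw [mem_range] at hi
      have : T ≤ b i := (hlt i hi).2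
      rw [max_eq_left]
      have : (T : ℝ) ≤ (b i : ℝ) := by exact_mod_cast this
      linarith
    rw [hsplit]
    have step1 : ∑ i ∈ range j, q i * ((b i : ℝ) - (T:ℕ))
        ≤ ∑ i ∈ range j, q i * ((a i : ℝ) - (T:ℕ)) := by
      have hqb : ∑ i ∈ range j, q i * (b i : ℝ) ≤ ∑ i ∈ range j, q i * (a i : ℝ) := by
        rcases Nat.eq_zero_or_pos j with h0 | h1
        · simp [h0]
        · rcases eq_or_lt_of_le hjn with he | hl
          · rw [he]; exact heq.ge
          · exact hmaj j h1 (by omega)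
      have e1 : ∀ (c : ℕ → ℕ), ∑ i ∈ range j, q i * ((c i : ℝ) - (T:ℕ))
          = ∑ i ∈ range j, q i * (c i : ℝ) - ∑ i ∈ range j, q i * (T:ℕ) := by
        intro c
        rw [← Finset.sum_sub_distrib]
        congr 1; ext i; ring
      rw [e1, e1]
      linarith
    calc ∑ i ∈ range j, q i * ((b i : ℝ) - (T:ℕ))
        ≤ ∑ i ∈ range j, q i * ((a i : ℝ) - (T:ℕ)) := step1
      _ ≤ ∑ i ∈ range j, q i * max ((a i : ℝ) - (T:ℕ)) 0 :=
          Finset.sum_le_sum (fun i _ => mul_le_mul_of_nonneg_left (le_max_left _ _) (hq i))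
      _ ≤ ∑ i ∈ range n, q i * max ((a i : ℝ) - (T:ℕ)) 0 := by
          apply Finset.sum_le_sum_of_subset_of_nonneg (Finset.range_subset_range.mpr hjn)
          intro i _ _
          exact mul_nonneg (hq i) (le_max_right _ _)
  -- M bound
  set M := (range n).sup (fun i => max (a i) (b i)) with hM
  have haM : ∀ i, i < n → a i ≤ M := fun i hi =>
    le_trans (le_max_left _ _) (Finset.le_sup (f := fun i => max (a i) (b i)) (mem_range.mpr hi))
  have hbM : ∀ i, i < n → b i ≤ M := fun i hi =>
    le_trans (le_max_right _ _) (Finset.le_sup (f := fun i => max (a i) (b i)) (mem_range.mpr hi))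
  have repa : ∀ i ∈ range n, q i * g (a i) = q i * (g 0 + (g 1 - g 0) * (a i)
      + ∑ t ∈ range M, ((g (t+2) - g (t+1)) - (g (t+1) - g t)) * max ((a i : ℝ) - (t+1:ℕ)) 0) := by
    intro i hi
    rw [← rep_lemma g M (a i) (haM i (mem_range.mp hi))]
  have repb : ∀ i ∈ range n, q i * g (b i) = q i * (g 0 + (g 1 - g 0) * (b i)
      + ∑ t ∈ range M, ((g (t+2) - g (t+1)) - (g (t+1) - g t)) * max ((b i : ℝ) - (t+1:ℕ)) 0) := by
    intro i hi
    rw [← rep_lemma g M (b i) (hbM i (mem_range.mp hi))]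
  rw [Finset.sum_congr rfl repa, Finset.sum_congr rfl repb]
  have expand : ∀ (c : ℕ → ℕ),
      ∑ i ∈ range n, q i * (g 0 + (g 1 - g 0) * (c i)
        + ∑ t ∈ range M, ((g (t+2) - g (t+1)) - (g (t+1) - g t)) * max ((c i : ℝ) - (t+1:ℕ)) 0)
      = (∑ i ∈ range n, q i * g 0) + (g 1 - g 0) * (∑ i ∈ range n, q i * (c i : ℝ))
        + ∑ t ∈ range M, ((g (t+2) - g (t+1)) - (g (t+1) - g t)) *
            (∑ i ∈ range n, q i * max ((c i : ℝ) - (t+1:ℕ)) 0) := by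
    intro c
    have e1 : ∀ i ∈ range n, q i * (g 0 + (g 1 - g 0) * (c i)
        + ∑ t ∈ range M, ((g (t+2) - g (t+1)) - (g (t+1) - g t)) * max ((c i : ℝ) - (t+1:ℕ)) 0)
        = q i * g 0 + (g 1 - g 0) * (q i * (c i : ℝ))
          + ∑ t ∈ range M, ((g (t+2) - g (t+1)) - (g (t+1) - g t)) * (q i * max ((c i : ℝ) - (t+1:ℕ)) 0) := by
      intro i _
      rw [mul_add, mul_add, Finset.mul_sum]
      congr 1
      · ring
      · apply Finset.sum_congr rfl; intro t _; ring
    rw [Finset.sum_congr rfl e1, Finset.sum_add_distrib, Finset.sum_add_distrib]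
    congr 1
    · congr 1
      rw [← Finset.mul_sum]
    · rw [Finset.sum_comm]
      apply Finset.sum_congr rfl
      intro t _
      rw [← Finset.mul_sum]
  rw [expand a, expand b, ← heq]
  apply add_le_add_right
  apply Finset.sum_le_sum
  intro t _
  have hcoef : 0 ≤ (g (t+2) - g (t+1)) - (g (t+1) - g t) := by
    have := hg t; linarith
  exact mul_le_mul_of_nonneg_left (hinge_dom (t+1) (by omega)) hcoef

lemma F_eq_ratio (k x : ℕ) : F k x = (S (x+k) k : ℝ) / (((x+k).choose k : ℕ) : ℝ) := by
  rw [F_eq]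
  have h1 : (((x+k).choose k : ℕ) : ℝ) = (((x+k)! : ℕ) : ℝ) / ((k ! : ℝ) * ((x ! : ℕ) : ℝ)) := by
    rw [Nat.cast_choose ℝ (Nat.le_add_left k x), show x + k - k = x by omega]
  rw [h1, div_div_eq_mul_div]
  ring

/-- The weighted-majorization inequality for the ratios `S(a+k,k)/C(a+k,k)`. -/
theorem stirling2_ratio_majorization (k : ℕ) (hk : 1 ≤ k) (n : ℕ)
    (q : ℕ → ℝ) (a b : ℕ → ℕ)
    (hq : ∀ i, 0 ≤ q i)
    (ha : ∀ i j, i ≤ j → j < n → a j ≤ a i)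
    (hb : ∀ i j, i ≤ j → j < n → b j ≤ b i)
    (hmaj : ∀ j, 1 ≤ j → j ≤ n - 1 →
      ∑ i ∈ Finset.range j, q i * (b i : ℝ) ≤ ∑ i ∈ Finset.range j, q i * (a i : ℝ))
    (heq : ∑ i ∈ Finset.range n, q i * (a i : ℝ) = ∑ i ∈ Finset.range n, q i * (b i : ℝ)) :
    ∏ i ∈ Finset.range n, ((S (b i + k) k : ℝ) / ((b i + k).choose k : ℝ)) ^ (q i) ≤
      ∏ i ∈ Finset.range n, ((S (a i + k) k : ℝ) / ((a i + k).choose k : ℝ)) ^ (q i) := by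
  have hfpos : ∀ x : ℕ, 0 < (S (x + k) k : ℝ) / ((x + k).choose k : ℝ) := by
    intro x
    apply div_pos
    · exact_mod_cast S_pos x k hk
    · exact_mod_cast Nat.choose_pos (Nat.le_add_left k x)
  have hlc : ∀ m : ℕ, ((S ((m+1) + k) k : ℝ) / (((m+1) + k).choose k : ℝ)) ^ 2
      ≤ ((S (m + k) k : ℝ) / ((m + k).choose k : ℝ))
        * ((S ((m+2) + k) k : ℝ) / (((m+2) + k).choose k : ℝ)) := by
    intro m
    have h := F_logconvex k m
    rwa [F_eq_ratio, F_eq_ratio, F_eq_ratio] at h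
  set g : ℕ → ℝ := fun m => Real.log ((S (m + k) k : ℝ) / ((m + k).choose k : ℝ)) with hg
  have hconv : ∀ m, 2 * g (m+1) ≤ g m + g (m+2) := by
    intro m
    have h1 : Real.log (((S ((m+1) + k) k : ℝ) / (((m+1) + k).choose k : ℝ)) ^ 2)
        ≤ Real.log (((S (m + k) k : ℝ) / ((m + k).choose k : ℝ))
            * ((S ((m+2) + k) k : ℝ) / (((m+2) + k).choose k : ℝ))) :=
      Real.log_le_log (pow_pos (hfpos (m+1)) 2) (hlc m)
    rw [Real.log_pow, Real.log_mul (hfpos m).ne' (hfpos (m+2)).ne'] at h1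
    simp only [hg]
    push_cast at h1
    linarith
  have main := fuchs g hconv n q a b hq hb hmaj heq
  have hb' : ∀ i ∈ range n, ((S (b i + k) k : ℝ) / ((b i + k).choose k : ℝ)) ^ (q i)
      = Real.exp (g (b i) * q i) := by
    intro i _
    rw [Real.rpow_def_of_pos (hfpos (b i))]
  have ha' : ∀ i ∈ range n, ((S (a i + k) k : ℝ) / ((a i + k).choose k : ℝ)) ^ (q i)
      = Real.exp (g (a i) * q i) := by
    intro i _
    rw [Real.rpow_def_of_pos (hfpos (a i))]
  rw [Finset.prod_congr rfl hb', Finset.prod_congr rfl ha', ← Real.exp_sum, ← Real.exp_sum]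
  apply Real.exp_le_exp.mpr
  have e1 : ∀ c : ℕ → ℕ, ∑ i ∈ range n, g (c i) * q i = ∑ i ∈ range n, q i * g (c i) := by
    intro c
    apply Finset.sum_congr rfl
    intro i _
    ring
  rw [e1 a, e1 b]
  exact main
end
end
end

section
/- For any fixed integer k ≥ 1 and nonnegative integers a_1,…,a_m, the m×m matrix with (i,j)-entry S(a_i+a_j+k, k)/C(a_i+a_j+k, k) has nonnegative determinant (indeed it is positive semidefinite). -/
open MeasureTheory intervalIntegral Finset

/-- Iterated integral over the unit cube of `g (t₁ + ⋯ + t_k)`. -/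
noncomputable def J : ℕ → (ℝ → ℝ) → ℝ
  | 0, g => g 0
  | k + 1, g => ∫ u in (0:ℝ)..1, J k (fun s => g (s + u))

/-- Finite difference sum. -/
noncomputable def B (p k : ℕ) (t : ℝ) : ℝ :=
  ∑ j ∈ Finset.range (k + 1), (-1 : ℝ) ^ (k + j) * (k.choose j) * (t + j) ^ p

lemma B_succ (p k : ℕ) (t : ℝ) : B p (k + 1) t = B p k (t + 1) - B p k t := by
  unfold B
  rw [Finset.sum_range_succ' _ (k + 1)]
  have h1 : ∀ j ∈ Finset.range (k + 1),
      (-1 : ℝ) ^ (k + 1 + (j + 1)) * ((k + 1).choose (j + 1)) * (t + ↑(j + 1)) ^ p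
        = (-1 : ℝ) ^ (k + j) * (k.choose j) * ((t + 1) + j) ^ p
          + (-1 : ℝ) ^ (k + 1 + (j + 1)) * (k.choose (j + 1)) * (t + ↑(j + 1)) ^ p := by
    intro j _
    rw [Nat.choose_succ_succ, show k + 1 + (j + 1) = (k + j) + 2 by ring]
    push_cast
    ring
  rw [Finset.sum_congr rfl h1, Finset.sum_add_distrib]
  have h2 : ∑ j ∈ Finset.range (k + 1),
        (-1 : ℝ) ^ (k + 1 + (j + 1)) * (k.choose (j + 1)) * (t + ↑(j + 1)) ^ p
      = ∑ j ∈ Finset.range (k + 2),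
        (-1 : ℝ) ^ (k + 1 + j) * (k.choose j) * (t + j) ^ p
        - (-1 : ℝ) ^ (k + 1 + 0) * (k.choose 0) * (t + ((0:ℕ):ℝ)) ^ p := by
    rw [Finset.sum_range_succ' (fun j => (-1 : ℝ) ^ (k + 1 + j) * (k.choose j) * (t + j) ^ p)]
    ring
  rw [h2, Finset.sum_range_succ _ (k + 1)]
  have hz : (k.choose (k + 1) : ℝ) = 0 := by
    rw [Nat.choose_eq_zero_of_lt (Nat.lt_succ_self k)]; norm_num
  rw [hz]
  have h3 : ∀ j ∈ Finset.range (k + 1),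
      (-1 : ℝ) ^ (k + 1 + j) * (k.choose j) * (t + j) ^ p
        = -((-1 : ℝ) ^ (k + j) * (k.choose j) * (t + j) ^ p) := by
    intro j _
    rw [show k + 1 + j = (k + j) + 1 by ring]
    ring
  rw [Finset.sum_congr rfl h3, Finset.sum_neg_distrib]
  simp only [Nat.choose_zero_right, Nat.cast_one, Nat.cast_zero]
  ring

lemma B_continuous (p k : ℕ) : Continuous (fun t : ℝ => B p k t) := by
  unfold B
  exact continuous_finset_sum _ fun j _ => by fun_prop

lemma B_int (p k : ℕ) (t : ℝ) :
    (∫ u in (0:ℝ)..1, B p k (t + u)) = B (p + 1) (k + 1) t / (p + 1) := by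
  rw [B_succ]
  have hL : (∫ u in (0:ℝ)..1, B p k (t + u))
      = ∑ j ∈ Finset.range (k + 1), (-1 : ℝ) ^ (k + j) * (k.choose j) *
          (((t + j + 1) ^ (p + 1) - (t + j) ^ (p + 1)) / (p + 1)) := by
    show (∫ u in (0:ℝ)..1, ∑ j ∈ Finset.range (k + 1),
        (-1 : ℝ) ^ (k + j) * (k.choose j) * ((t + u) + j) ^ p) = _
    rw [intervalIntegral.integral_finset_sum (fun j _ => by
      apply Continuous.intervalIntegrable; fun_prop)]
    refine Finset.sum_congr rfl fun j _ => ?_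
    rw [intervalIntegral.integral_const_mul]
    congr 1
    have h : (fun u : ℝ => (t + u + j) ^ p) = fun u : ℝ => ((t + j) + u) ^ p := by
      funext u; ring_nf
    calc (∫ u in (0:ℝ)..1, (t + u + j) ^ p)
        = ∫ u in (0:ℝ)..1, ((t + j) + u) ^ p := by rw [h]
      _ = ∫ x in (t + j + 0)..(t + j + 1), x ^ p := by
          rw [intervalIntegral.integral_comp_add_left (fun x => x ^ p) (t + j)]
      _ = ((t + j + 1) ^ (p + 1) - (t + j) ^ (p + 1)) / (p + 1) := by
          rw [integral_pow]; rw [add_zero]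
  rw [hL]
  unfold B
  rw [← Finset.sum_sub_distrib, Finset.sum_div]
  refine Finset.sum_congr rfl fun j _ => ?_
  have hp : ((p : ℝ) + 1) ≠ 0 := by positivity
  field_simp
  ring

lemma J_nonneg (k : ℕ) (g : ℝ → ℝ) (hg : ∀ s, 0 ≤ g s) : 0 ≤ J k g := by
  induction k generalizing g with
  | zero => exact hg 0
  | succ k ih =>
      exact intervalIntegral.integral_nonneg (by norm_num)
        (fun u _ => ih _ (fun s => hg (s + u)))

lemma J_sum (k : ℕ) {ι : Type} (I : Finset ι) (c : ι → ℝ) (n : ι → ℕ) (t : ℝ) :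
    J k (fun s => ∑ i ∈ I, c i * (s + t) ^ (n i))
      = ∑ i ∈ I, c i * (((n i).factorial : ℝ) / (((n i + k).factorial : ℝ))) * B (n i + k) k t := by
  induction k generalizing t with
  | zero =>
      show (∑ i ∈ I, c i * ((0:ℝ) + t) ^ (n i)) = _
      refine Finset.sum_congr rfl fun i _ => ?_
      unfold B
      have h0 : ((n i).factorial : ℝ) ≠ 0 := Nat.cast_ne_zero.2 (Nat.factorial_ne_zero _)
      simp [Nat.add_zero, zero_add, div_self h0]
  | succ k ih =>
      show (∫ u in (0:ℝ)..1, J k (fun s => (fun s' => ∑ i ∈ I, c i * (s' + t) ^ (n i)) (s + u))) = _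
      have hJ : ∀ u : ℝ, J k (fun s => (fun s' => ∑ i ∈ I, c i * (s' + t) ^ (n i)) (s + u))
          = ∑ i ∈ I, c i * (((n i).factorial : ℝ) / (((n i + k).factorial : ℝ)))
              * B (n i + k) k (t + u) := by
        intro u
        have hre : (fun s => (fun s' => ∑ i ∈ I, c i * (s' + t) ^ (n i)) (s + u))
            = fun s => ∑ i ∈ I, c i * (s + (t + u)) ^ (n i) := by
          funext s
          exact Finset.sum_congr rfl fun i _ => by ring_nf
        rw [hre, ih]
      rw [intervalIntegral.integral_congr (fun u _ => hJ u),
        intervalIntegral.integral_finset_sum (fun i _ => by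
          apply Continuous.intervalIntegrable
          have := B_continuous (n i + k) k
          fun_prop)]
      refine Finset.sum_congr rfl fun i _ => ?_
      simp only [← Nat.add_assoc]
      rw [intervalIntegral.integral_const_mul, B_int]
      have hfac : ((n i + k + 1).factorial : ℝ)
          = (((n i + k) : ℕ) + 1) * ((n i + k).factorial : ℝ) := by
        rw [Nat.factorial_succ]
        push_cast
        ring
      rw [hfac, ← div_div]
      ring

lemma B_zero_eq (n k : ℕ) : B n k 0 = (k.factorial : ℝ) * S n k := by
  induction n generalizing k with
  | zero =>
      unfold B
      simp only [pow_zero, mul_one]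
      have hZ : (∑ j ∈ Finset.range (k + 1), (-1 : ℝ) ^ (k + j) * (k.choose j))
          = (-1 : ℝ) ^ k * (if k = 0 then 1 else 0) := by
        have h0 := Int.alternating_sum_range_choose (n := k)
        have h0' := congrArg (fun z : ℤ => (z : ℝ)) h0
        push_cast at h0'
        calc (∑ j ∈ Finset.range (k + 1), (-1 : ℝ) ^ (k + j) * (k.choose j))
            = (-1 : ℝ) ^ k * ∑ j ∈ Finset.range (k + 1), (-1 : ℝ) ^ j * (k.choose j) := by
              rw [Finset.mul_sum]
              exact Finset.sum_congr rfl fun j _ => by rw [pow_add]; ring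
          _ = (-1 : ℝ) ^ k * (if k = 0 then 1 else 0) := by
              rw [h0']
      rw [hZ]
      cases k with
      | zero => norm_num [S]
      | succ k => norm_num [S]
  | succ n ih =>
      cases k with
      | zero =>
          unfold B
          norm_num [S]
      | succ k =>
          have key : B (n + 1) (k + 1) 0 = ((k : ℝ) + 1) * B n k 1 := by
            unfold B
            rw [Finset.sum_range_succ' _ (k + 1)]
            have hz0 : (-1 : ℝ) ^ (k + 1 + 0) * ((k + 1).choose 0) * ((0:ℝ) + ((0:ℕ):ℝ)) ^ (n + 1)
                = 0 := by norm_num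
            rw [hz0, add_zero, Finset.mul_sum]
            refine Finset.sum_congr rfl fun j _ => ?_
            have hch : (((k + 1).choose (j + 1) : ℕ) : ℝ) * ((j : ℝ) + 1)
                = ((k : ℝ) + 1) * ((k.choose j : ℕ) : ℝ) := by
              have h0 := Nat.add_one_mul_choose_eq k j
              have h0' := congrArg (fun z : ℕ => (z : ℝ)) h0
              push_cast at h0'
              linarith
            rw [show k + 1 + (j + 1) = (k + j) + 2 by ring]
            push_cast
            have hpow : ((0:ℝ) + ((j:ℝ) + 1)) ^ (n + 1)
                = ((j : ℝ) + 1) * ((1:ℝ) + j) ^ n := by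
              rw [zero_add, pow_succ]
              ring_nf
            rw [hpow]
            calc (-1 : ℝ) ^ (k + j + 2) * (((k + 1).choose (j + 1) : ℕ) : ℝ)
                  * (((j : ℝ) + 1) * ((1:ℝ) + j) ^ n)
                = (-1 : ℝ) ^ (k + j) * ((1:ℝ) + j) ^ n
                    * ((((k + 1).choose (j + 1) : ℕ) : ℝ) * ((j : ℝ) + 1)) := by ring
              _ = (-1 : ℝ) ^ (k + j) * ((1:ℝ) + j) ^ n
                    * (((k : ℝ) + 1) * ((k.choose j : ℕ) : ℝ)) := by rw [hch]
              _ = ((k : ℝ) + 1) * ((-1 : ℝ) ^ (k + j) * ((k.choose j : ℕ) : ℝ)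
                    * ((1:ℝ) + (j:ℝ)) ^ n) := by ring
          have hB1 : B n k 1 = B n (k + 1) 0 + B n k 0 := by
            have h := B_succ n k 0
            rw [zero_add] at h
            linarith
          rw [key, hB1, ih (k + 1), ih k]
          rw [show S (n+1) (k+1) = (k + 1) * S n (k + 1) + S n k from rfl,
            Nat.factorial_succ]
          push_cast
          ring

lemma J_monomial' (n k : ℕ) :
    J k (fun s => s ^ n) = ((n.factorial : ℝ) / ((n + k).factorial : ℝ)) * B (n + k) k 0 := by
  have h := J_sum k {0} (fun _ : ℕ => (1:ℝ)) (fun _ => n) 0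
  simp only [Finset.sum_singleton, one_mul] at h
  have h' : (fun s : ℝ => (s + 0) ^ n) = fun s : ℝ => s ^ n := by
    funext s; rw [add_zero]
  rw [h'] at h
  rw [h]

lemma J_monomial (n k : ℕ) :
    J k (fun s => s ^ n) = (S (n + k) k : ℝ) / ((n + k).choose k : ℝ) := by
  rw [J_monomial', B_zero_eq]
  have hc : ((n + k).choose k : ℝ) * ((n.factorial : ℝ) * (k.factorial : ℝ))
      = ((n + k).factorial : ℝ) := by
    have h0 := Nat.add_choose_mul_factorial_mul_factorial n k
    have h0' := congrArg (fun z : ℕ => (z : ℝ)) h0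
    push_cast at h0'
    linarith
  have h1 : ((n + k).choose k : ℝ) ≠ 0 :=
    Nat.cast_ne_zero.2 (Nat.choose_pos (Nat.le_add_left _ _)).ne'
  have h2 : ((n + k).factorial : ℝ) ≠ 0 := Nat.cast_ne_zero.2 (Nat.factorial_ne_zero _)
  field_simp
  linear_combination ((S (n + k) k : ℕ) : ℝ) * hc

/-- The matrix with entries `S(a_i+a_j+k,k)/C(a_i+a_j+k,k)` has nonnegative determinant
(indeed it is positive semidefinite). -/
theorem stirling2_ratio_matrix_det_nonneg (k : ℕ) (hk : 1 ≤ k) (m : ℕ) (a : Fin m → ℕ) :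
    0 ≤ (Matrix.of fun i j : Fin m =>
          (S (a i + a j + k) k : ℝ) / ((a i + a j + k).choose k : ℝ)).det ∧
      (Matrix.of fun i j : Fin m =>
          (S (a i + a j + k) k : ℝ) / ((a i + a j + k).choose k : ℝ)).PosSemidef := by
  set M := (Matrix.of fun i j : Fin m =>
      (S (a i + a j + k) k : ℝ) / ((a i + a j + k).choose k : ℝ)) with hM
  have hEntry : ∀ i j, M i j = J k (fun s => s ^ (a i + a j)) := by
    intro i j
    rw [hM, Matrix.of_apply, J_monomial]
  have hpsd : M.PosSemidef := by
    rw [Matrix.posSemidef_iff_dotProduct_mulVec]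
    constructor
    · ext i j
      simp only [Matrix.conjTranspose_apply, hM, Matrix.of_apply, star_trivial]
      rw [add_comm (a j) (a i)]
    · intro x
      have hq : dotProduct (star x) (M.mulVec x)
          = ∑ p : Fin m × Fin m, (x p.1 * x p.2) * M p.1 p.2 := by
        rw [Fintype.sum_prod_type]
        simp only [dotProduct, Matrix.mulVec, dotProduct, star_trivial,
          Pi.star_apply, Finset.mul_sum]
        refine Finset.sum_congr rfl fun i _ => Finset.sum_congr rfl fun j _ => by ring
      rw [hq]
      have hq2 : (∑ p : Fin m × Fin m, (x p.1 * x p.2) * M p.1 p.2)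
          = J k (fun s => ∑ p : Fin m × Fin m,
              (x p.1 * x p.2) * (s + 0) ^ (a p.1 + a p.2)) := by
        rw [J_sum k Finset.univ (fun p : Fin m × Fin m => x p.1 * x p.2)
          (fun p => a p.1 + a p.2) 0]
        refine Finset.sum_congr rfl fun p _ => ?_
        rw [hEntry p.1 p.2, J_monomial']
        ring
      rw [hq2]
      apply J_nonneg
      intro s
      have hsq : (∑ p : Fin m × Fin m, (x p.1 * x p.2) * (s + 0) ^ (a p.1 + a p.2))
          = (∑ i, x i * s ^ (a i)) ^ 2 := by
        rw [sq, Finset.sum_mul_sum, ← Finset.sum_product']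
        rw [show ((Finset.univ : Finset (Fin m)) ×ˢ (Finset.univ : Finset (Fin m)))
            = (Finset.univ : Finset (Fin m × Fin m)) from Finset.univ_product_univ]
        refine Finset.sum_congr rfl fun p _ => ?_
        rw [add_zero, pow_add]
        ring
      rw [hsq]
      positivity
  refine ⟨?_, hpsd⟩
  rw [hpsd.1.det_eq_prod_eigenvalues]
  refine Finset.prod_nonneg fun i _ => ?_
  have := hpsd.eigenvalues_nonneg i
  exact_mod_cast this
end

section
/- Define 𝔖₁(n,k) = S(n,k−1)² − S(n,k−2)·S(n,k) for n ≥ k ≥ 2. Then for any fixed n ≥ k ≥ 2, the sequence m ↦ 𝔖₁(n+m, k+m) is strictly increasing in m ≥ 0. -/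
lemma S_eq_zero : ∀ n k, n < k → S n k = 0 := by
  intro n
  induction n with
  | zero => intro k hk; obtain ⟨k', rfl⟩ := Nat.exists_eq_add_of_lt hk; rfl
  | succ n ih =>
    intro k hk
    obtain ⟨k', rfl⟩ := Nat.exists_eq_succ_of_ne_zero (by omega : k ≠ 0)
    show (k' + 1) * S n (k' + 1) + S n k' = 0
    rw [ih (k' + 1) (by omega), ih k' (by omega)]
    ring

lemma S_pos_s14 : ∀ n k, 1 ≤ k → k ≤ n → 0 < S n k := by
  intro n
  induction n with
  | zero => intro k h1 h2; omega
  | succ n ih =>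
    intro k h1 h2
    obtain ⟨k', rfl⟩ := Nat.exists_eq_succ_of_ne_zero (by omega : k ≠ 0)
    show 0 < (k' + 1) * S n (k' + 1) + S n k'
    rcases Nat.eq_zero_or_pos k' with rfl | hk'
    · rcases Nat.eq_zero_or_pos n with rfl | hn
      · decide
      · have h1 : 0 < S n 1 := ih 1 le_rfl hn
        have : S n (0 + 1) = S n 1 := rfl
        omega
    · have := ih k' hk' (by omega)
      omega

lemma S_logconcave : ∀ n k, S n k * S n (k + 2) ≤ S n (k + 1) ^ 2 := by
  intro n
  induction n with
  | zero => intro k; show S 0 k * 0 ≤ _; simp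
  | succ n ih =>
    intro k
    rcases Nat.eq_zero_or_pos k with rfl | hk
    · show 0 * _ ≤ _
      simp
    obtain ⟨j, rfl⟩ := Nat.exists_eq_succ_of_ne_zero (by omega : k ≠ 0)
    have h1 : S n j * S n (j + 2) ≤ S n (j + 1) ^ 2 := ih j
    have h2 : S n (j + 1) * S n (j + 3) ≤ S n (j + 2) ^ 2 := ih (j + 1)
    -- cross inequality at level n : S n j * S n (j+3) ≤ S n (j+1) * S n (j+2)
    have cross : S n j * S n (j + 3) ≤ S n (j + 1) * S n (j + 2) := by
      rcases le_or_gt (j + 2) n with hn | hn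
      · have hB : 0 < S n (j + 1) := S_pos_s14 n (j + 1) (by omega) (by omega)
        have hC : 0 < S n (j + 2) := S_pos_s14 n (j + 2) (by omega) (by omega)
        have key : (S n j * S n (j + 3)) * (S n (j+1) * S n (j+2)) ≤
            (S n (j+1) * S n (j+2)) * (S n (j+1) * S n (j+2)) := by
          calc (S n j * S n (j + 3)) * (S n (j+1) * S n (j+2))
              = (S n j * S n (j+2)) * (S n (j+1) * S n (j+3)) := by ring
            _ ≤ S n (j+1) ^ 2 * S n (j+2) ^ 2 := Nat.mul_le_mul h1 h2
            _ = (S n (j+1) * S n (j+2)) * (S n (j+1) * S n (j+2)) := by ring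
        exact Nat.le_of_mul_le_mul_right key (Nat.mul_pos hB hC)
      · rw [S_eq_zero n (j + 3) (by omega)]
        simp
    show ((j+1)*S n (j+1) + S n j) * ((j+3)*S n (j+3) + S n (j+2)) ≤
      ((j+2)*S n (j+2) + S n (j+1)) ^ 2
    zify at h1 h2 cross ⊢
    set A := (S n j : ℤ)
    set B := (S n (j+1) : ℤ)
    set C := (S n (j+2) : ℤ)
    set D := (S n (j+3) : ℤ)
    have t1 : ((j:ℤ)+1)*((j:ℤ)+3)*(B*D) ≤ ((j:ℤ)+1)*((j:ℤ)+3)*(C^2) :=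
      mul_le_mul_of_nonneg_left h2 (by positivity)
    have t2 : ((j:ℤ)+3)*(A*D) ≤ ((j:ℤ)+3)*(B*C) :=
      mul_le_mul_of_nonneg_left cross (by positivity)
    have t3 : ((j:ℤ)+1)*((j:ℤ)+3)*(C^2) ≤ ((j:ℤ)+2)^2*(C^2) := by nlinarith [sq_nonneg C]
    nlinarith [t1, t2, t3, h1]

lemma S_cross (n k : ℕ) : S n k * S n (k + 3) ≤ S n (k + 1) * S n (k + 2) := by
  rcases le_or_gt (k + 2) n with hn | hn
  · have hB : 0 < S n (k + 1) := S_pos_s14 n (k + 1) (by omega) (by omega)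
    have hC : 0 < S n (k + 2) := S_pos_s14 n (k + 2) (by omega) (by omega)
    have h1 : S n k * S n (k + 2) ≤ S n (k + 1) ^ 2 := S_logconcave n k
    have h2 : S n (k + 1) * S n (k + 3) ≤ S n (k + 2) ^ 2 := S_logconcave n (k + 1)
    have key : (S n k * S n (k + 3)) * (S n (k+1) * S n (k+2)) ≤
        (S n (k+1) * S n (k+2)) * (S n (k+1) * S n (k+2)) := by
      calc (S n k * S n (k + 3)) * (S n (k+1) * S n (k+2))
          = (S n k * S n (k+2)) * (S n (k+1) * S n (k+3)) := by ring
        _ ≤ S n (k+1) ^ 2 * S n (k+2) ^ 2 := Nat.mul_le_mul h1 h2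
        _ = (S n (k+1) * S n (k+2)) * (S n (k+1) * S n (k+2)) := by ring
    exact Nat.le_of_mul_le_mul_right key (Nat.mul_pos hB hC)
  · rw [S_eq_zero n (k + 3) (by omega)]
    simp

/-- `𝔖₁(n,k) = S(n,k-1)² - S(n,k-2)·S(n,k)`. -/
def S1 (n k : ℕ) : ℤ := (S n (k - 1) : ℤ) ^ 2 - (S n (k - 2) : ℤ) * (S n k : ℤ)

lemma S1_step (n i : ℕ) (hn : i + 2 ≤ n) : S1 n (i + 2) < S1 (n + 1) (i + 3) := by
  have e1 : S1 n (i + 2) = (S n (i+1) : ℤ) ^ 2 - (S n i : ℤ) * (S n (i+2) : ℤ) := rfl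
  have e2 : S1 (n + 1) (i + 3) =
      (S (n+1) (i+2) : ℤ) ^ 2 - (S (n+1) (i+1) : ℤ) * (S (n+1) (i+3) : ℤ) := rfl
  have r1 : S (n+1) (i+2) = (i+2) * S n (i+2) + S n (i+1) := rfl
  have r2 : S (n+1) (i+1) = (i+1) * S n (i+1) + S n i := rfl
  have r3 : S (n+1) (i+3) = (i+3) * S n (i+3) + S n (i+2) := rfl
  have hbd' : S n (i+1) * S n (i+3) ≤ S n (i+2) ^ 2 := S_logconcave n (i+1)
  have had' : S n i * S n (i+3) ≤ S n (i+1) * S n (i+2) := S_cross n i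
  have hc' : 0 < S n (i+2) := S_pos_s14 n (i+2) (by omega) hn
  rw [e1, e2, r1, r2, r3]
  zify at hbd' had' hc'
  push_cast
  set a := (S n i : ℤ)
  set b := (S n (i+1) : ℤ)
  set c := (S n (i+2) : ℤ)
  set d := (S n (i+3) : ℤ)
  nlinarith [mul_le_mul_of_nonneg_left hbd' (by positivity : (0:ℤ) ≤ ((i:ℤ)+1)*((i:ℤ)+3)),
    mul_le_mul_of_nonneg_left had' (by positivity : (0:ℤ) ≤ (i:ℤ)+3), sq_nonneg c, hc',
    mul_pos hc' hc']

/-- For fixed `n ≥ k ≥ 2`, the sequence `m ↦ 𝔖₁(n+m, k+m)` is strictly increasing. -/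
theorem S1_diagonal_strictMono (n k : ℕ) (h2 : 2 ≤ k) (hkn : k ≤ n) :
    StrictMono fun m : ℕ => S1 (n + m) (k + m) := by
  apply strictMono_nat_of_lt_succ
  intro m
  obtain ⟨i, rfl⟩ := Nat.exists_eq_add_of_le h2
  have h := S1_step (n + m) (i + m) (by omega)
  have e1 : 2 + i + m = (i + m) + 2 := by ring
  have e2 : 2 + i + (m + 1) = (i + m) + 3 := by ring
  have e3 : n + (m + 1) = n + m + 1 := by ring
  simp only [e1, e2, e3]
  exact h
end
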